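/- Let Z be a metric space such that for every r > 0 there exists N(r) such that every ball of radius r in Z contains at most N(r) points. Let A be a group acting faithfully on Z by (L, C)-quasi-isometries, and let B be a normal subgroup of A that is finitely generated and acts discretely and cocompactly on Z. Then B has finite index in A. -/

import Mathlib

/-- Kleiner's lemma: if Z is a metric space with uniformly finite balls, A acts
faithfully on Z by (L, C)-quasi-isometries, and B ⊴ A is a finitely generated
normal subgroup acting discretely and cocompactly on Z, then B has finite
index in A. -/
theorem stmt13 {Z : Type*} [MetricSpace Z] {A : Type*} [Group A]
    (hZ : ∀ r : ℝ, 0 < r → ∃ N : ℕ, ∀ z : Z,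
      (Metric.closedBall z r).Finite ∧ (Metric.closedBall z r).ncard ≤ N)
    (ρ : A →* Equiv.Perm Z) (hfaith : Function.Injective ρ)
    (L C : ℝ)
    (hqi : ∀ (a : A) (x y : Z),
      L⁻¹ * dist x y - C ≤ dist (ρ a x) (ρ a y) ∧
      dist (ρ a x) (ρ a y) ≤ L * dist x y + C)
    (B : Subgroup A) (hnorm : B.Normal) (hfg : B.FG)
    (hdisc : ∀ (p : Z) (R : ℝ), {b : A | b ∈ B ∧ dist (ρ b p) p ≤ R}.Finite)
    (hcocpt : ∃ (p : Z) (D : ℝ), ∀ z : Z, ∃ b ∈ B, dist z (ρ b p) ≤ D) :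
    B.FiniteIndex := by
  classical
  obtain ⟨p, D, hD⟩ := hcocpt
  have hup : ∀ (a : A) (x y : Z), dist (ρ a x) (ρ a y) ≤ L * dist x y + C :=
    fun a x y => (hqi a x y).2
  have hC : 0 ≤ C := by
    have h := (hqi 1 p p).1
    simp at h
    linarith
  -- finiteness of all balls
  have hball : ∀ (z : Z) (r : ℝ), {w : Z | dist w z ≤ r}.Finite := by
    intro z r
    obtain ⟨N, hN⟩ := hZ (max r 1) (lt_of_lt_of_le one_pos (le_max_right _ _))
    exact (hN z).1.subset (fun w hw => Metric.mem_closedBall.mpr (le_trans hw (le_max_left _ _)))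
  by_cases hL : 0 ≤ L
  swap
  · -- Z is bounded, hence finite, hence A is finite
    push_neg at hL
    have hfinZ : Finite Z := by
      rw [← Set.finite_univ_iff]
      refine (hball p (C / (1 - L))).subset ?_
      intro x _
      have h := hup 1 x p
      simp only [map_one, Equiv.Perm.coe_one, id_eq] at h
      have h1 : (1 - L) * dist x p ≤ C := by linarith
      show dist x p ≤ C / (1 - L)
      rw [le_div_iff₀ (by linarith)]
      linarith
    have : Finite A := Finite.of_injective ρ hfaith
    exact Subgroup.finiteIndex_of_finite_quotient
  · have hD0 : 0 ≤ D := by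
      obtain ⟨b, -, hb⟩ := hD p
      exact le_trans dist_nonneg hb
    set R : ℝ := L * D + C with hRdef
    have hR0 : 0 ≤ R := add_nonneg (mul_nonneg hL hD0) hC
    -- moving a point back by b⁻¹ lands near p
    have hinvmove : ∀ (b : A) (z : Z), dist z (ρ b p) ≤ D → dist (ρ b⁻¹ z) p ≤ R := by
      intro b z hz
      have he : ρ b⁻¹ (ρ b p) = p := by
        rw [map_inv, Equiv.Perm.coe_inv, Equiv.symm_apply_apply]
      have h := hup b⁻¹ z (ρ b p)
      rw [he] at h
      refine h.trans ?_
      have := mul_le_mul_of_nonneg_left hz hL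
      simp only [hRdef]
      linarith
    -- orbit representatives within R of p
    have hreps : ∀ z : Z, ∃ b ∈ B, ∃ z₀ : Z, dist z₀ p ≤ R ∧ ρ b z₀ = z := by
      intro z
      obtain ⟨b, hbB, hb⟩ := hD z
      exact ⟨b, hbB, ρ b⁻¹ z, hinvmove b z hb,
        by rw [map_inv, Equiv.Perm.coe_inv, Equiv.apply_symm_apply]⟩
    -- every coset has a representative moving p at most R
    have hdecomp : ∀ a : A, ∃ g : A, dist (ρ g p) p ≤ R ∧
        (QuotientGroup.mk g : A ⧸ B) = QuotientGroup.mk a := by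
      intro a
      obtain ⟨b, hbB, hb⟩ := hD (ρ a p)
      refine ⟨b⁻¹ * a, ?_, ?_⟩
      · have h1 : ρ (b⁻¹ * a) p = ρ b⁻¹ (ρ a p) := by
          rw [map_mul, Equiv.Perm.mul_apply]
        rw [h1]
        exact hinvmove b (ρ a p) hb
      · rw [QuotientGroup.eq]
        have h2 : (b⁻¹ * a)⁻¹ * a = a⁻¹ * b * (a⁻¹)⁻¹ := by group
        rw [h2]
        exact hnorm.conj_mem b hbB a⁻¹
    -- finite generating set and displacement bound
    obtain ⟨S, hSgen⟩ := hfg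
    set M : ℝ := (insert (0:ℝ) (S.image fun s => dist (ρ s p) p)).max'
      ⟨0, Finset.mem_insert_self _ _⟩ with hMdef
    have hM0 : 0 ≤ M := Finset.le_max' _ _ (Finset.mem_insert_self _ _)
    have hMS : ∀ s ∈ S, dist (ρ s p) p ≤ M := by
      intro s hs
      rw [hMdef]
      exact Finset.le_max' _ _
        (Finset.mem_insert_of_mem (Finset.mem_image_of_mem (fun s => dist (ρ s p) p) hs))
    -- inverses fix fixed points
    have hfixinv : ∀ (h : A) (q : Z), ρ h q = q → ρ h⁻¹ q = q := by
      intro h q hh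
      rw [map_inv]
      conv_lhs => rw [← hh]
      exact Equiv.symm_apply_apply _ _
    -- the centralizing stabilizer is finite
    have hCset : ∀ q : Z, dist q p ≤ R →
        {g : A | ρ g q = q ∧ ∀ b ∈ B, g * b = b * g}.Finite := by
      intro q hq
      set Z₀ : Set Z := {z : Z | dist z p ≤ R} with hZ₀def
      haveI : Finite ↥Z₀ := (hball p R).to_subtype
      set E : ℝ := L * (R + R) + C + (R + R) with hEdef
      set F : A → (↥Z₀ → Z) := fun g z₀ => ρ g z₀.1 with hFdef
      have himg : (F '' {g : A | ρ g q = q ∧ ∀ b ∈ B, g * b = b * g}) ⊆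
          Set.univ.pi (fun z₀ : ↥Z₀ => {w : Z | dist w z₀.1 ≤ E}) := by
        rintro _ ⟨g, hg, rfl⟩ z₀ -
        show dist (ρ g z₀.1) z₀.1 ≤ E
        have h1 : dist z₀.1 q ≤ R + R := by
          calc dist z₀.1 q ≤ dist z₀.1 p + dist p q := dist_triangle _ _ _
          _ ≤ R + R := by rw [dist_comm p q]; exact add_le_add z₀.2 hq
        have h2 : dist (ρ g z₀.1) (ρ g q) ≤ L * dist z₀.1 q + C := hup g _ _
        rw [hg.1] at h2
        have h3 : dist (ρ g z₀.1) z₀.1 ≤ dist (ρ g z₀.1) (ρ g q) + dist (ρ g q) z₀.1 :=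
          dist_triangle _ _ _
        rw [hg.1, dist_comm q z₀.1] at h3
        have h4 : L * dist z₀.1 q ≤ L * (R + R) := mul_le_mul_of_nonneg_left h1 hL
        simp only [hEdef]
        linarith
      have hinj : Set.InjOn F {g : A | ρ g q = q ∧ ∀ b ∈ B, g * b = b * g} := by
        intro g hg g' hg' hFF
        have hall : ∀ z : Z, ρ g z = ρ g' z := by
          intro z
          obtain ⟨b, hbB, z₀, hz₀, hbz⟩ := hreps z
          have h1 : ρ g z₀ = ρ g' z₀ := congrFun hFF ⟨z₀, hz₀⟩
          calc ρ g z = ρ g (ρ b z₀) := by rw [hbz]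
          _ = ρ (g * b) z₀ := by rw [map_mul, Equiv.Perm.mul_apply]
          _ = ρ (b * g) z₀ := by rw [hg.2 b hbB]
          _ = ρ b (ρ g z₀) := by rw [map_mul, Equiv.Perm.mul_apply]
          _ = ρ b (ρ g' z₀) := by rw [h1]
          _ = ρ (b * g') z₀ := by rw [map_mul, Equiv.Perm.mul_apply]
          _ = ρ (g' * b) z₀ := by rw [hg'.2 b hbB]
          _ = ρ g' (ρ b z₀) := by rw [map_mul, Equiv.Perm.mul_apply]
          _ = ρ g' z := by rw [hbz]
        exact hfaith (Equiv.ext hall)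
      exact Set.Finite.of_finite_image
        ((Set.Finite.pi (fun z₀ => hball z₀.1 E)).subset himg) hinj
    -- stabilizers of points near p are finite
    have hstab : ∀ q : Z, dist q p ≤ R → {h : A | ρ h q = q}.Finite := by
      intro q hq
      set K : ℝ := (L * R + C) + (L * (L * R + C + M + R) + C) + R with hKdef
      have hT : {b : A | b ∈ B ∧ dist (ρ b p) p ≤ K}.Finite := hdisc p K
      have hconj : ∀ h : A, ρ h q = q → ∀ s ∈ S,
          (h * s * h⁻¹ ∈ B ∧ dist (ρ (h * s * h⁻¹) p) p ≤ K) := by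
        intro h hh s hs
        have hsB : s ∈ B := hSgen ▸ Subgroup.subset_closure hs
        refine ⟨hnorm.conj_mem s hsB h, ?_⟩
        have hhinv : ρ h⁻¹ q = q := hfixinv h q hh
        have hc : ρ (h * s * h⁻¹) q = ρ h (ρ s q) := by
          rw [map_mul, map_mul, Equiv.Perm.mul_apply, Equiv.Perm.mul_apply, hhinv]
        have d1 : dist (ρ s q) q ≤ L * R + C + M + R := by
          have t1 : dist (ρ s q) (ρ s p) ≤ L * dist q p + C := hup s q p
          have t2 := hMS s hs
          have t3 : dist (ρ s q) q ≤ dist (ρ s q) (ρ s p) + dist (ρ s p) p + dist p q :=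
            dist_triangle4 _ _ _ _
          have t4 : L * dist q p ≤ L * R := mul_le_mul_of_nonneg_left hq hL
          rw [dist_comm p q] at t3
          linarith
        have d2 : dist (ρ (h * s * h⁻¹) q) q ≤ L * (L * R + C + M + R) + C := by
          rw [hc]
          calc dist (ρ h (ρ s q)) q = dist (ρ h (ρ s q)) (ρ h q) := by rw [hh]
          _ ≤ L * dist (ρ s q) q + C := hup h _ _
          _ ≤ L * (L * R + C + M + R) + C := by
              have := mul_le_mul_of_nonneg_left d1 hL
              linarith
        have d3 : dist (ρ (h * s * h⁻¹) p) p ≤ dist (ρ (h * s * h⁻¹) p) (ρ (h * s * h⁻¹) q)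
            + dist (ρ (h * s * h⁻¹) q) q + dist q p := dist_triangle4 _ _ _ _
        have d4 : dist (ρ (h * s * h⁻¹) p) (ρ (h * s * h⁻¹) q) ≤ L * R + C := by
          have t5 := hup (h * s * h⁻¹) p q
          have t6 : L * dist p q ≤ L * R := by
            rw [dist_comm]
            exact mul_le_mul_of_nonneg_left hq hL
          exact le_trans t5 (add_le_add_left t6 C)
        simp only [hKdef]
        linarith
      set Φ : A → (↥S → A) := fun h s => h * s.1 * h⁻¹ with hΦdef
      have hTfun : (Set.univ.pi
          (fun _ : ↥S => {b : A | b ∈ B ∧ dist (ρ b p) p ≤ K})).Finite :=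
        Set.Finite.pi (fun _ => hT)
      have hcover : {h : A | ρ h q = q} ⊆
          ⋃ f ∈ Set.univ.pi (fun _ : ↥S => {b : A | b ∈ B ∧ dist (ρ b p) p ≤ K}),
            {h : A | ρ h q = q ∧ Φ h = f} := by
        intro h hh
        refine Set.mem_biUnion (fun s _ => ?_) ⟨hh, rfl⟩
        exact hconj h hh s.1 s.2
      refine Set.Finite.subset (Set.Finite.biUnion hTfun ?_) hcover
      intro f _
      by_cases hne : {h : A | ρ h q = q ∧ Φ h = f}.Nonempty
      · obtain ⟨h₀, hh₀⟩ := hne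
        have hsub : {h : A | ρ h q = q ∧ Φ h = f} ⊆
            (fun g => h₀ * g) '' {g : A | ρ g q = q ∧ ∀ b ∈ B, g * b = b * g} := by
          intro h hh
          refine ⟨h₀⁻¹ * h, ⟨?_, ?_⟩, by group⟩
          · rw [map_mul, Equiv.Perm.mul_apply, hh.1, hfixinv h₀ q hh₀.1]
          · intro b hbB
            have hcent : B ≤ Subgroup.centralizer {h₀⁻¹ * h} := by
              rw [← hSgen, Subgroup.closure_le]
              intro s hs
              rw [SetLike.mem_coe, Subgroup.mem_centralizer_iff]
              intro y hy
              rw [Set.mem_singleton_iff] at hy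
              subst hy
              have he : h * s * h⁻¹ = h₀ * s * h₀⁻¹ := by
                have e1 : Φ h ⟨s, hs⟩ = f ⟨s, hs⟩ := by rw [hh.2]
                have e2 : Φ h₀ ⟨s, hs⟩ = f ⟨s, hs⟩ := by rw [hh₀.2]
                simp only [hΦdef] at e1 e2
                rw [e1, e2]
              calc (h₀⁻¹ * h) * s = h₀⁻¹ * (h * s * h⁻¹) * h := by group
              _ = h₀⁻¹ * (h₀ * s * h₀⁻¹) * h := by rw [he]
              _ = s * (h₀⁻¹ * h) := by group
            have := Subgroup.mem_centralizer_iff.mp (hcent hbB) (h₀⁻¹ * h)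
              (Set.mem_singleton _)
            exact this
        exact ((hCset q hq).image _).subset hsub
      · rw [Set.not_nonempty_iff_eq_empty] at hne
        rw [hne]
        exact Set.finite_empty
    -- the set of good coset representatives is finite
    have hG : {g : A | dist (ρ g p) p ≤ R}.Finite := by
      have hcover : {g : A | dist (ρ g p) p ≤ R} ⊆
          ⋃ q ∈ {w : Z | dist w p ≤ R}, {g : A | ρ g p = q} := by
        intro g hg
        exact Set.mem_biUnion hg rfl
      refine Set.Finite.subset (Set.Finite.biUnion (hball p R) ?_) hcover
      intro q hq
      by_cases hne : {g : A | ρ g p = q}.Nonempty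
      · obtain ⟨g₀, hg₀⟩ := hne
        have hsub : {g : A | ρ g p = q} ⊆ (fun h => h * g₀) '' {h : A | ρ h q = q} := by
          intro g hg
          refine ⟨g * g₀⁻¹, ?_, by group⟩
          have h1 : ρ g₀⁻¹ q = p := by
            rw [map_inv, ← hg₀, Equiv.Perm.coe_inv, Equiv.symm_apply_apply]
          show ρ (g * g₀⁻¹) q = q
          rw [map_mul, Equiv.Perm.mul_apply, h1, hg]
        exact ((hstab q hq).image _).subset hsub
      · rw [Set.not_nonempty_iff_eq_empty] at hne
        rw [hne]
        exact Set.finite_empty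
    -- conclude
    haveI : Finite ↥{g : A | dist (ρ g p) p ≤ R} := hG.to_subtype
    have hsurj : Function.Surjective
        (fun g : ↥{g : A | dist (ρ g p) p ≤ R} => (QuotientGroup.mk g.1 : A ⧸ B)) := by
      intro x
      obtain ⟨a, rfl⟩ := QuotientGroup.mk_surjective x
      obtain ⟨g, hg1, hg2⟩ := hdecomp a
      exact ⟨⟨g, hg1⟩, hg2⟩
    haveI : Finite (A ⧸ B) := Finite.of_surjective _ hsurj
    exact Subgroup.finiteIndex_of_finite_quotient
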